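/- Let X = {Xⁿ} and Y = {Yⁿ} be arbitrary general sources where Xⁿ and Yⁿ take values in countable sets 𝒳ⁿ and 𝒴ⁿ respectively. Then for every n ≥ 1, every real number z_n, and every γ > 0, there exists a mapping φ_n : 𝒳ⁿ → 𝒴ⁿ such that d(φ_n(Xⁿ), Yⁿ) ≤ 2·max( Pr{Xⁿ ∉ S_n(z_n + γ)}, Pr{Yⁿ ∉ T_n(z_n)} ) + 2·e^{−√n·γ}. -/

import Mathlib

open Filter MeasureTheory
open scoped BigOperators

noncomputable section

/-- Probability of a set under a probability mass function. -/
def prb {α : Type*} (P : α → ℝ) (s : Set α) : ℝ := ∑' a, s.indicator P a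

/-- Variational distance between two mass functions on the same countable set. -/
def varDist {α : Type*} (P Q : α → ℝ) : ℝ := ∑' a, |P a - Q a|

/-- `P` is a probability mass function. -/
def IsPMF {α : Type*} (P : α → ℝ) : Prop := (∀ a, 0 ≤ P a) ∧ HasSum P 1

/-- Pushforward of a mass function through a map. -/
def pushMap {α β : Type*} (P : α → ℝ) (φ : α → β) : β → ℝ :=
  fun b => ∑' a, Set.indicator {a | φ a = b} P a

/-- The uniform mass function on `Fin M`. -/
def unif (M : ℕ) : Fin M → ℝ := fun _ => 1 / (M : ℝ)

section AuxHan
variable {α : Type*}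

lemma prb_nonneg {P : α → ℝ} (h : ∀ a, 0 ≤ P a) (s : Set α) : 0 ≤ prb P s :=
  tsum_nonneg fun a => Set.indicator_nonneg (fun a _ => h a) a

lemma prb_le_prb {P : α → ℝ} (hs : Summable P) {s t : Set α}
    (hle : ∀ a, s.indicator P a ≤ t.indicator P a) : prb P s ≤ prb P t :=
  Summable.tsum_le_tsum hle (hs.indicator s) (hs.indicator t)

lemma prb_mono {P : α → ℝ} (h0 : ∀ a, 0 ≤ P a) (hs : Summable P) {s t : Set α}
    (hsub : s ⊆ t) : prb P s ≤ prb P t :=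
  prb_le_prb hs (fun a => Set.indicator_le_indicator_of_subset hsub h0 a)

lemma prb_union {P : α → ℝ} (hs : Summable P) {s t : Set α} (h : Disjoint s t) :
    prb P (s ∪ t) = prb P s + prb P t := by
  unfold prb
  rw [Set.indicator_union_of_disjoint h, Summable.tsum_add (hs.indicator s) (hs.indicator t)]

lemma prb_compl_add {P : α → ℝ} (hs : Summable P) (s : Set α) :
    prb P s + prb P sᶜ = ∑' a, P a := by
  rw [← prb_union hs disjoint_compl_right, Set.union_compl_self]
  unfold prb; rw [Set.indicator_univ]

lemma prb_empty (P : α → ℝ) : prb P ∅ = 0 := by unfold prb; simp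

lemma prb_finset (P : α → ℝ) (F : Finset α) : prb P ↑F = ∑ a ∈ F, P a := by
  unfold prb; rw [← tsum_subtype]; exact F.tsum_subtype' P

lemma finset_extract [DecidableEq α] {P : α → ℝ} {ε t : ℝ} (hε : 0 < ε) (ht : 0 < t) :
    ∀ F : Finset α, (∀ a, 0 ≤ P a) → (∀ a ∈ F, P a ≤ ε) → t ≤ ∑ a ∈ F, P a →
      ∃ G : Finset α, G ⊆ F ∧ t ≤ ∑ a ∈ G, P a ∧ ∑ a ∈ G, P a < t + ε := by
  intro F
  induction F using Finset.strongInduction with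
  | _ F ih =>
    intro h0 hFε hFt
    by_cases h : ∑ a ∈ F, P a < t + ε
    · exact ⟨F, Finset.Subset.refl F, hFt, h⟩
    · push_neg at h
      have hne : F.Nonempty := by
        rcases F.eq_empty_or_nonempty with rfl | hne
        · simp at hFt; linarith
        · exact hne
      obtain ⟨x, hx⟩ := hne
      have hsub : F.erase x ⊂ F := Finset.erase_ssubset hx
      have hsum : ∑ a ∈ F.erase x, P a = ∑ a ∈ F, P a - P x :=
        Finset.sum_erase_eq_sub hx
      have ht' : t ≤ ∑ a ∈ F.erase x, P a := by
        rw [hsum]; have := hFε x hx; linarith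
      obtain ⟨G, hG, h1, h2⟩ := ih _ hsub h0 (fun a ha => hFε a (Finset.mem_of_mem_erase ha)) ht'
      exact ⟨G, hG.trans (Finset.erase_subset x F), h1, h2⟩

lemma extract {P : α → ℝ} (h0 : ∀ a, 0 ≤ P a) (hs : Summable P) {R : Set α} {ε t : ℝ}
    (hε : 0 < ε) (ht : 0 < t) (hR : ∀ a ∈ R, P a ≤ ε) :
    ∃ B : Set α, B ⊆ R ∧ prb P B < t + ε ∧ (t ≤ prb P B ∨ B = R) := by
  classical
  by_cases h : prb P R < t + ε
  · refine ⟨R, subset_rfl, h, ?_⟩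
    by_cases h2 : t ≤ prb P R
    exacts [Or.inl h2, Or.inr rfl]
  · push_neg at h
    have hsum : Summable (R.indicator P) := hs.indicator R
    have hlt : t < ∑' a, R.indicator P a := lt_of_lt_of_le (by linarith) h
    have hev : ∀ᶠ F in atTop, t < ∑ a ∈ F, R.indicator P a :=
      hsum.hasSum.eventually (eventually_gt_nhds hlt)
    obtain ⟨F, hF⟩ := hev.exists
    set F' := F.filter (· ∈ R) with hF'
    have hFsum : ∑ a ∈ F, R.indicator P a = ∑ a ∈ F', P a := by
      rw [hF', Finset.sum_filter]
      exact Finset.sum_congr rfl fun a _ => by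
        by_cases h : a ∈ R <;> simp [Set.indicator_apply, h]
    obtain ⟨G, hGF, h1, h2⟩ := finset_extract hε ht F' h0
      (fun a ha => hR a (Finset.mem_filter.mp ha).2) (le_of_lt (hFsum ▸ hF))
    refine ⟨↑G, fun a ha => (Finset.mem_filter.mp (hGF ha)).2, ?_, Or.inl ?_⟩
    · rw [prb_finset]; exact h2
    · rw [prb_finset]; exact h1

lemma pushMap_eq_prb {β : Type*} (P : α → ℝ) (φ : α → β) (b : β) :
    pushMap P φ b = prb P {a | φ a = b} := rfl

lemma pushMap_fiber {β : Type*} (P : α → ℝ) (φ : α → β) (b : β) :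
    pushMap P φ b = ∑' (c : {a // φ a = b}), P (c : α) :=
  (tsum_subtype {a | φ a = b} P).symm

lemma pushMap_spec {β : Type*} {P : α → ℝ} (hs : Summable P) (φ : α → β) :
    Summable (pushMap P φ) ∧ ∑' b, pushMap P φ b = ∑' a, P a := by
  have he : Summable fun p : Σ b, {a // φ a = b} => P p.2 :=
    (Equiv.sigmaFiberEquiv φ).summable_iff.mpr hs
  have hfun : pushMap P φ = fun b => ∑' (c : {a // φ a = b}), P (c : α) :=
    funext (pushMap_fiber P φ)
  constructor
  · rw [hfun]; exact he.sigma
  · rw [hfun, ← Summable.tsum_sigma he]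
    exact (Equiv.sigmaFiberEquiv φ).tsum_eq P

lemma pushMap_nonneg {β : Type*} {P : α → ℝ} (h0 : ∀ a, 0 ≤ P a) (φ : α → β) (b : β) :
    0 ≤ pushMap P φ b :=
  prb_nonneg h0 _

end AuxHan


/-- Lemma 1 (Han): for arbitrary general sources `X`, `Y`, every `n ≥ 1`, every real
`z_n` and every `γ > 0`, there exists a mapping `φ_n : 𝒳ⁿ → 𝒴ⁿ` such that
`d(φ_n(Xⁿ), Yⁿ) ≤ 2 max( Pr{Xⁿ ∉ S_n(z_n+γ)}, Pr{Yⁿ ∉ T_n(z_n)} ) + 2 e^{−√n γ}`,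
where `S_n(c) = {x | (1/√n) log(1/P_{Xⁿ}(x)) ≥ c}` and
`T_n(c) = {y | (1/√n) log(1/P_{Yⁿ}(y)) ≤ c}`. -/
theorem approximation_lemma_direct
    {𝒳 𝒴 : Type*} [Countable 𝒳] [Countable 𝒴]
    (P : 𝒳 → ℝ) (Q : 𝒴 → ℝ) (hP : IsPMF P) (hQ : IsPMF Q)
    (n : ℕ) (hn : 1 ≤ n) (z γ : ℝ) (hγ : 0 < γ) :
    ∃ φ : 𝒳 → 𝒴,
      varDist (pushMap P φ) Q ≤
        2 * max (prb P ({x | z + γ ≤ (1 / Real.sqrt n) * Real.log (1 / P x)}ᶜ))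
                (prb Q ({y | (1 / Real.sqrt n) * Real.log (1 / Q y) ≤ z}ᶜ))
          + 2 * Real.exp (-(Real.sqrt n * γ)) := by
  classical
  obtain ⟨hP0, hP1⟩ := hP
  obtain ⟨hQ0, hQ1⟩ := hQ
  have hPs : Summable P := hP1.summable
  have hQs : Summable Q := hQ1.summable
  have hPt : ∑' a, P a = 1 := hP1.tsum_eq
  have hQt : ∑' a, Q a = 1 := hQ1.tsum_eq
  have h𝒴 : Nonempty 𝒴 := by
    by_contra h
    rw [not_nonempty_iff] at h
    rw [tsum_empty] at hQt
    norm_num at hQt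
  set c := Real.sqrt n with hc
  have hc0 : 0 < c := Real.sqrt_pos.mpr (by exact_mod_cast Nat.pos_of_ne_zero (by omega))
  set ε := Real.exp (-(c * (z + γ))) with hεdef
  set δ := Real.exp (-(c * z)) with hδdef
  have hε0 : 0 < ε := Real.exp_pos _
  have hδ0 : 0 < δ := Real.exp_pos _
  have hεδ : ε = δ * Real.exp (-(c * γ)) := by
    rw [hεdef, hδdef, ← Real.exp_add]; ring_nf
  set S : Set 𝒳 := {x | P x ≤ ε} with hSdef
  set T : Set 𝒴 := {y | δ ≤ Q y} with hTdef
  set A' := prb P ({x | z + γ ≤ 1 / c * Real.log (1 / P x)}ᶜ) with hA'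
  set B' := prb Q ({y | 1 / c * Real.log (1 / Q y) ≤ z}ᶜ) with hB'
  -- key1 : our Sᶜ has smaller prob than statement Sᶜ
  have key1 : prb P Sᶜ ≤ A' := by
    apply prb_mono hP0 hPs
    intro x hx
    simp only [hSdef, Set.mem_compl_iff, Set.mem_setOf_eq, not_le] at hx ⊢
    have hPx : 0 < P x := lt_trans hε0 hx
    have h1 : 1 / P x < 1 / ε := one_div_lt_one_div_of_lt hε0 hx
    have h2 : Real.log (1 / P x) < Real.log (1 / ε) := Real.log_lt_log (by positivity) h1
    have h3 : Real.log (1 / ε) = c * (z + γ) := by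
      rw [one_div, hεdef, ← Real.exp_neg, Real.log_exp]; ring
    rw [h3] at h2
    calc 1 / c * Real.log (1 / P x) < 1 / c * (c * (z + γ)) :=
          mul_lt_mul_of_pos_left h2 (by positivity)
      _ = z + γ := by field_simp
  -- key2 : our Tᶜ has smaller prob than statement Tᶜ
  have key2 : prb Q Tᶜ ≤ B' := by
    apply prb_le_prb hQs
    intro y
    by_cases hy : y ∈ Tᶜ
    · rcases eq_or_lt_of_le (hQ0 y) with hz | hz
      · have hle : Tᶜ.indicator Q y ≤ 0 := by
          rw [Set.indicator_apply]; split_ifs <;> simp [← hz]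
        exact hle.trans (Set.indicator_nonneg (fun a _ => hQ0 a) y)
      · have hyT : Q y < δ := by
          simpa [hTdef, not_le] using hy
        have hmem : y ∈ ({y | 1 / c * Real.log (1 / Q y) ≤ z}ᶜ : Set 𝒴) := by
          simp only [Set.mem_compl_iff, Set.mem_setOf_eq, not_le]
          have h1 : 1 / δ < 1 / Q y := one_div_lt_one_div_of_lt hz hyT
          have h2 : Real.log (1 / δ) < Real.log (1 / Q y) := Real.log_lt_log (by positivity) h1
          have h3 : Real.log (1 / δ) = c * z := by
            rw [one_div, hδdef, ← Real.exp_neg, Real.log_exp]; ring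
          rw [h3] at h2
          calc z = 1 / c * (c * z) := by field_simp
            _ < 1 / c * Real.log (1 / Q y) := mul_lt_mul_of_pos_left h2 (by positivity)
        rw [Set.indicator_of_mem hy, Set.indicator_of_mem hmem]
    · rw [Set.indicator_of_notMem hy]
      exact Set.indicator_nonneg (fun a _ => hQ0 a) y
  -- T is finite
  have hTfin : T.Finite := by
    have h1 : ∀ᶠ y in cofinite, Q y < δ :=
      hQs.tendsto_cofinite_zero.eventually (eventually_lt_nhds hδ0)
    rw [Filter.eventually_cofinite] at h1
    apply h1.subset
    intro y hy
    simp only [hTdef, Set.mem_setOf_eq] at hy ⊢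
    exact not_lt.mpr hy
  have hpushS : ∀ φ : 𝒳 → 𝒴, Summable (pushMap P φ) := fun φ => (pushMap_spec hPs φ).1
  have hpushT : ∀ φ : 𝒳 → 𝒴, ∑' b, pushMap P φ b = 1 := fun φ => (pushMap_spec hPs φ).2.trans hPt
  have habs : ∀ φ : 𝒳 → 𝒴, Summable (fun b => |pushMap P φ b - Q b|) := by
    intro φ
    apply Summable.of_nonneg_of_le (fun b => abs_nonneg _) (fun b => ?_) ((hpushS φ).add hQs)
    have h1 := pushMap_nonneg hP0 φ b
    have h2 := hQ0 b
    rcases abs_cases (pushMap P φ b - Q b) with ⟨h, _⟩ | ⟨h, _⟩ <;> rw [h] <;> linarith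
  have hexp : 0 < Real.exp (-(c * γ)) := Real.exp_pos _
  by_cases hTe : T = ∅
  · obtain ⟨y0⟩ := h𝒴
    refine ⟨fun _ => y0, ?_⟩
    have h1 : prb Q Tᶜ = 1 := by
      rw [hTe, Set.compl_empty]
      unfold prb; rw [Set.indicator_univ]; exact hQt
    have hB1 : (1:ℝ) ≤ B' := by rw [h1] at key2; exact key2
    have hd : varDist (pushMap P (fun _ => y0)) Q ≤ 2 := by
      unfold varDist
      have hle : ∀ b, |pushMap P (fun _ => y0) b - Q b| ≤ pushMap P (fun _ => y0) b + Q b := by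
        intro b
        have h1 := pushMap_nonneg hP0 (fun _ => y0) b
        have h2 := hQ0 b
        rcases abs_cases (pushMap P (fun _ => y0) b - Q b) with ⟨h, _⟩ | ⟨h, _⟩ <;> rw [h] <;> linarith
      calc ∑' b, |pushMap P (fun _ => y0) b - Q b|
          ≤ ∑' b, (pushMap P (fun _ => y0) b + Q b) :=
            Summable.tsum_le_tsum hle (habs _) ((hpushS _).add hQs)
        _ = 1 + 1 := by rw [Summable.tsum_add (hpushS _) hQs, hpushT, hQt]
        _ = 2 := by norm_num
    have hmax : (1:ℝ) ≤ max A' B' := le_trans hB1 (le_max_right _ _)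
    linarith
  · have hTne : T.Nonempty := Set.nonempty_iff_ne_empty.mpr hTe
    haveI hfT : Fintype ↥T := hTfin.fintype
    set M := Fintype.card ↥T with hM
    have hM0 : 0 < M := Fintype.card_pos_iff.mpr hTne.to_subtype
    set e := Fintype.equivFin ↥T with he
    set yy : ℕ → 𝒴 := fun i =>
      if h : i < M then ((e.symm ⟨i, h⟩ : ↥T) : 𝒴) else ((e.symm ⟨0, hM0⟩ : ↥T) : 𝒴) with hyy
    have hyT : ∀ i, i < M → yy i ∈ T := by
      intro i hi
      simp only [hyy, dif_pos hi]
      exact (e.symm ⟨i, hi⟩).2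
    have hyinj : ∀ i, i < M → ∀ j, j < M → yy i = yy j → i = j := by
      intro i hi j hj hij
      simp only [hyy, dif_pos hi, dif_pos hj] at hij
      have h1 : (⟨i, hi⟩ : Fin M) = ⟨j, hj⟩ := e.symm.injective (Subtype.coe_injective hij)
      simpa using h1
    have hysurj : ∀ b, b ∈ T → ∃ i, i < M ∧ yy i = b := by
      intro b hb
      refine ⟨(e ⟨b, hb⟩).1, (e ⟨b, hb⟩).2, ?_⟩
      simp only [hyy, dif_pos (e ⟨b, hb⟩).2, Fin.eta, Equiv.symm_apply_apply]
      exact dif_pos (e ⟨b, hb⟩).2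
    set q : ℕ → ℝ := fun i => Q (yy i) with hq
    have hqδ : ∀ i, i < M → δ ≤ q i := fun i hi => hyT i hi
    have hSle : ∀ a, a ∈ S → P a ≤ ε := fun a ha => ha
    set pick : Set 𝒳 → ℝ → Set 𝒳 := fun R t =>
      if h : R ⊆ S ∧ 0 < t then
        (extract hP0 hPs hε0 h.2 (fun a ha => hSle a (h.1 ha))).choose
      else ∅ with hpickdef
    have hpick : ∀ R t, R ⊆ S → 0 < t →
        pick R t ⊆ R ∧ prb P (pick R t) < t + ε ∧ (t ≤ prb P (pick R t) ∨ pick R t = R) := by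
      intro R t h1 h2
      have h : R ⊆ S ∧ 0 < t := ⟨h1, h2⟩
      simp only [hpickdef, dif_pos h]
      exact (extract hP0 hPs hε0 h.2 (fun a ha => hSle a (h.1 ha))).choose_spec
    have hpick_sub : ∀ R t, pick R t ⊆ R := by
      intro R t
      by_cases h : R ⊆ S ∧ 0 < t
      · simp only [hpickdef, dif_pos h]
        exact (extract hP0 hPs hε0 h.2 (fun a ha => hSle a (h.1 ha))).choose_spec.1
      · simp only [hpickdef, dif_neg h]
        exact Set.empty_subset R
    set Rs : ℕ → Set 𝒳 := fun k => Nat.rec S (fun i Ri => Ri \ pick Ri (q i)) k with hRs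
    have hR0 : Rs 0 = S := rfl
    have hRsucc : ∀ k, Rs (k + 1) = Rs k \ pick (Rs k) (q k) := fun k => rfl
    set Bs : ℕ → Set 𝒳 := fun i => pick (Rs i) (q i) with hBs
    have hBsub : ∀ i, Bs i ⊆ Rs i := fun i => hpick_sub _ _
    have hRS : ∀ k, Rs k ⊆ S := by
      intro k
      induction k with
      | zero => exact subset_rfl
      | succ k ih => rw [hRsucc]; exact Set.diff_subset.trans ih
    set AA : ℕ → ℝ := fun i => prb P (Bs i) with hAA
    have hBspec : ∀ i, i < M → AA i < q i + ε ∧ (q i ≤ AA i ∨ Bs i = Rs i) := by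
      intro i hi
      exact (hpick (Rs i) (q i) (hRS i) (lt_of_lt_of_le hδ0 (hqδ i hi))).2
    have hRanti : ∀ {i j : ℕ}, i ≤ j → Rs j ⊆ Rs i :=fun {i j} hij =>
      antitone_nat_of_succ_le (fun k => by rw [hRsucc]; exact Set.diff_subset) hij
    have hdisj : ∀ i j, i < j → Disjoint (Bs i) (Bs j) := by
      intro i j hij
      rw [Set.disjoint_left]
      intro x hxi hxj
      have hx : x ∈ Rs (i + 1) := hRanti (Nat.succ_le_of_lt hij) (hBsub j hxj)
      rw [hRsucc] at hx
      exact hx.2 hxi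
    have hUprb : ∀ k, prb P (⋃ i ∈ Finset.range k, Bs i) = ∑ i ∈ Finset.range k, AA i := by
      intro k
      induction k with
      | zero => simp [prb_empty]
      | succ k ih =>
        rw [Finset.range_add_one, Finset.sum_insert Finset.notMem_range_self,
          Finset.set_biUnion_insert]
        have hd : Disjoint (Bs k) (⋃ i ∈ Finset.range k, Bs i) := by
          rw [Set.disjoint_iUnion_right]
          intro i
          rw [Set.disjoint_iUnion_right]
          intro hi
          exact (hdisj i k (Finset.mem_range.mp hi)).symm
        rw [prb_union hPs hd, ih]
    set U : Set 𝒳 := ⋃ i ∈ Finset.range M, Bs i with hU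
    set L : ℝ := prb P Uᶜ with hL
    have hL0 : 0 ≤ L := prb_nonneg hP0 _
    have hAA0 : ∀ i, 0 ≤ AA i := fun i => prb_nonneg hP0 _
    have hpart : ∑ i ∈ Finset.range M, AA i + L = 1 := by
      have h1 := prb_compl_add hPs U
      rw [hPt] at h1
      rw [← hUprb M, ← hU]
      exact h1
    set FT := hTfin.toFinset with hFT
    have hFTcoe : (↑FT : Set 𝒴) = T := hTfin.coe_toFinset
    have hreidx : ∀ g : 𝒴 → ℝ, ∑ i ∈ Finset.range M, g (yy i) = ∑ b ∈ FT, g b := by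
      intro g
      apply Finset.sum_bij (fun i _ => yy i)
      · intro i hi
        rw [hFT, Set.Finite.mem_toFinset]
        exact hyT i (Finset.mem_range.mp hi)
      · intro i hi j hj hij
        exact hyinj i (Finset.mem_range.mp hi) j (Finset.mem_range.mp hj) hij
      · intro b hb
        obtain ⟨i, hi, hib⟩ := hysurj b (by rwa [hFT, Set.Finite.mem_toFinset] at hb)
        exact ⟨i, Finset.mem_range.mpr hi, hib⟩
      · intro i _
        rfl
    set b₀ : ℝ := prb Q Tᶜ with hb₀
    have hb₀0 : 0 ≤ b₀ := prb_nonneg hQ0 _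
    have hii : ∑ i ∈ Finset.range M, q i + b₀ = 1 := by
      have h1 : ∑ i ∈ Finset.range M, q i = prb Q T := by
        rw [hreidx Q, ← prb_finset Q FT, hFTcoe]
      rw [h1, hb₀]
      have h2 := prb_compl_add hQs T
      rw [hQt] at h2
      exact h2
    have hMδ : (M : ℝ) * δ ≤ 1 := by
      have h1 : (M : ℝ) * δ = ∑ _i ∈ Finset.range M, δ := by
        rw [Finset.sum_const, Finset.card_range, nsmul_eq_mul]
      have h2 : ∑ _i ∈ Finset.range M, δ ≤ ∑ i ∈ Finset.range M, q i :=
        Finset.sum_le_sum (fun i hi => hqδ i (Finset.mem_range.mp hi))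
      linarith
    have hMε : (M : ℝ) * ε ≤ Real.exp (-(c * γ)) := by
      rw [hεδ]
      calc (M : ℝ) * (δ * Real.exp (-(c * γ))) = ((M : ℝ) * δ) * Real.exp (-(c * γ)) := by ring
        _ ≤ 1 * Real.exp (-(c * γ)) := mul_le_mul_of_nonneg_right hMδ (le_of_lt hexp)
        _ = _ := one_mul _
    set φ : 𝒳 → 𝒴 := fun x => if h : ∃ i, i < M ∧ x ∈ Bs i then yy (Nat.find h) else yy 0 with hφ
    refine ⟨φ, ?_⟩
    have hUmem : ∀ x, x ∈ U ↔ ∃ k, k < M ∧ x ∈ Bs k := by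
      intro x
      rw [hU]
      simp only [Set.mem_iUnion, Finset.mem_range, exists_prop]
    have hBuniq : ∀ i j, ∀ x : 𝒳, x ∈ Bs i → x ∈ Bs j → i = j := by
      intro i j x hxi hxj
      rcases lt_trichotomy i j with h | h | h
      · exact absurd hxj (Set.disjoint_left.mp (hdisj i j h) hxi)
      · exact h
      · exact absurd hxi (Set.disjoint_left.mp (hdisj j i h) hxj)
    have hφmem : ∀ i, i < M → ∀ x, x ∈ Bs i → φ x = yy i := by
      intro i hi x hx
      have hex : ∃ k, k < M ∧ x ∈ Bs k := ⟨i, hi, hx⟩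
      have hspec := Nat.find_spec hex
      have heq : Nat.find hex = i := hBuniq _ _ x hspec.2 hx
      simp only [hφ, dif_pos hex, heq]
    have hφrange : ∀ x, ∃ k, k < M ∧ φ x = yy k := by
      intro x
      by_cases hex : ∃ i, i < M ∧ x ∈ Bs i
      · exact ⟨Nat.find hex, (Nat.find_spec hex).1, by simp only [hφ, dif_pos hex]⟩
      · exact ⟨0, hM0, by simp only [hφ, dif_neg hex]⟩
    have hfib_out : ∀ b, b ∉ T → pushMap P φ b = 0 := by
      intro b hb
      have hset : {x | φ x = b} = (∅ : Set 𝒳) := by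
        ext x
        simp only [Set.mem_setOf_eq, Set.mem_empty_iff_false, iff_false]
        intro hxb
        obtain ⟨k, hk, hfk⟩ := hφrange x
        apply hb
        rw [← hxb, hfk]
        exact hyT k hk
      rw [pushMap_eq_prb, hset, prb_empty]
    have hfib_pos : ∀ i, 0 < i → i < M → {x | φ x = yy i} = Bs i := by
      intro i h0i hi
      ext x
      simp only [Set.mem_setOf_eq]
      constructor
      · intro hxb
        by_cases hex : ∃ k, k < M ∧ x ∈ Bs k
        · have hspec := Nat.find_spec hex
          have hfx : φ x = yy (Nat.find hex) := by simp only [hφ, dif_pos hex]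
          have hik : Nat.find hex = i := hyinj _ hspec.1 _ hi (by rw [← hfx, hxb])
          exact hik ▸ hspec.2
        · have hfx : φ x = yy 0 := by simp only [hφ, dif_neg hex]
          have h0 : (0 : ℕ) = i := hyinj 0 hM0 i hi (by rw [← hfx, hxb])
          omega
      · exact hφmem i hi x
    have hfib_zero : {x | φ x = yy 0} = Bs 0 ∪ Uᶜ := by
      ext x
      simp only [Set.mem_setOf_eq, Set.mem_union]
      constructor
      · intro hxb
        by_cases hex : ∃ k, k < M ∧ x ∈ Bs k
        · have hspec := Nat.find_spec hex
          have hfx : φ x = yy (Nat.find hex) := by simp only [hφ, dif_pos hex]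
          have hik : Nat.find hex = 0 := hyinj _ hspec.1 0 hM0 (by rw [← hfx, hxb])
          exact Or.inl (hik ▸ hspec.2)
        · right
          intro hxU
          exact hex ((hUmem x).mp hxU)
      · rintro (hx | hx)
        · exact hφmem 0 hM0 x hx
        · have hex : ¬ ∃ k, k < M ∧ x ∈ Bs k := fun hc => hx ((hUmem x).mpr hc)
          simp only [hφ, dif_neg hex]
    have hpush_pos : ∀ i, 0 < i → i < M → pushMap P φ (yy i) = AA i := by
      intro i h0 hi
      rw [pushMap_eq_prb, hfib_pos i h0 hi]
    have hdBU : Disjoint (Bs 0) Uᶜ := by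
      rw [Set.disjoint_left]
      intro x hx hxc
      exact hxc ((hUmem x).mpr ⟨0, hM0, hx⟩)
    have hpush_zero : pushMap P φ (yy 0) = AA 0 + L := by
      rw [pushMap_eq_prb, hfib_zero, prb_union hPs hdBU]
    have hsplit : varDist (pushMap P φ) Q =
        ∑ b ∈ FT, |pushMap P φ b - Q b| +
          ∑' (b : ↥((↑FT : Set 𝒴)ᶜ)), |pushMap P φ ↑b - Q ↑b| := by
      rw [varDist]
      exact (Summable.sum_add_tsum_compl (habs φ)).symm
    have htail : ∑' (b : ↥((↑FT : Set 𝒴)ᶜ)), |pushMap P φ ↑b - Q ↑b| = b₀ := by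
      have h1 : ∀ b : ↥((↑FT : Set 𝒴)ᶜ), |pushMap P φ ↑b - Q ↑b| = Q ↑b := by
        intro b
        have hbT : (b : 𝒴) ∉ T := by
          rw [← hFTcoe]
          exact b.2
        rw [hfib_out _ hbT, zero_sub, abs_neg, abs_of_nonneg (hQ0 _)]
      rw [tsum_congr h1]
      rw [tsum_subtype ((↑FT : Set 𝒴)ᶜ) Q]
      rw [hb₀]
      rw [hFTcoe]
      rfl
    have hhead : ∑ b ∈ FT, |pushMap P φ b - Q b| =
        ∑ i ∈ Finset.range M, |pushMap P φ (yy i) - q i| :=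
      (hreidx (fun b => |pushMap P φ b - Q b|)).symm
    have hterm : ∀ i ∈ Finset.range M,
        |pushMap P φ (yy i) - q i| ≤ (q i - AA i) + 2 * ε + (if i = 0 then L else 0) := by
      intro i hi
      rw [Finset.mem_range] at hi
      have h2 := (hBspec i hi).1
      by_cases h0 : i = 0
      · subst h0
        rw [hpush_zero, if_pos rfl]
        rcases abs_cases (AA 0 + L - q 0) with ⟨h, _⟩ | ⟨h, _⟩ <;> rw [h] <;> linarith
      · rw [hpush_pos i (Nat.pos_of_ne_zero h0) hi, if_neg h0]
        rcases abs_cases (AA i - q i) with ⟨h, _⟩ | ⟨h, _⟩ <;> rw [h] <;> linarith [hAA0 i]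
    have hsum_if : ∑ i ∈ Finset.range M, (if i = 0 then L else 0) = L := by
      rw [Finset.sum_ite_eq' (Finset.range M) 0 (fun _ => L),
        if_pos (Finset.mem_range.mpr hM0)]
    have hsq : ∑ i ∈ Finset.range M, (q i - AA i) = L - b₀ := by
      rw [Finset.sum_sub_distrib]
      linarith [hpart, hii]
    have hbound1 : ∑ i ∈ Finset.range M, |pushMap P φ (yy i) - q i|
        ≤ (L - b₀) + (M : ℝ) * (2 * ε) + L := by
      calc ∑ i ∈ Finset.range M, |pushMap P φ (yy i) - q i|
          ≤ ∑ i ∈ Finset.range M, ((q i - AA i) + 2 * ε + (if i = 0 then L else 0)) :=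
            Finset.sum_le_sum hterm
        _ = ∑ i ∈ Finset.range M, ((q i - AA i) + 2 * ε) + L := by
            rw [Finset.sum_add_distrib, hsum_if]
        _ = (L - b₀) + (M : ℝ) * (2 * ε) + L := by
            rw [Finset.sum_add_distrib, hsq, Finset.sum_const, Finset.card_range, nsmul_eq_mul]
    have hfinal : varDist (pushMap P φ) Q ≤ 2 * L + 2 * ((M : ℝ) * ε) := by
      rw [hsplit, htail, hhead]
      linarith [hbound1]
    have hLmax : L ≤ max A' B' := by
      by_cases hRM : Rs M = ∅
      · have hsub : Uᶜ ⊆ Sᶜ := by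
          intro x hx hxS
          have hclaim : ∀ k, k ≤ M → x ∈ Rs k := by
            intro k
            induction k with
            | zero => intro _; exact hxS
            | succ k ih =>
              intro hk
              have hxk : x ∈ Rs k := ih (Nat.le_of_succ_le hk)
              have hxB : x ∉ Bs k := fun hB => hx ((hUmem x).mpr ⟨k, Nat.lt_of_succ_le hk, hB⟩)
              rw [hRsucc]
              exact ⟨hxk, hxB⟩
          have := hclaim M le_rfl
          rw [hRM] at this
          exact this
        have hLS : L ≤ prb P Sᶜ := prb_mono hP0 hPs hsub
        exact le_trans (le_trans hLS key1) (le_max_left _ _)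
      · have hAq : ∀ i, i < M → q i ≤ AA i := by
          intro i hi
          rcases (hBspec i hi).2 with h | h
          · exact h
          · exfalso
            apply hRM
            have h1 : Rs (i + 1) = Rs i \ Bs i := hRsucc i
            rw [h, Set.diff_self] at h1
            have h2 : Rs M ⊆ Rs (i + 1) := hRanti (Nat.succ_le_of_lt hi)
            rw [h1] at h2
            exact Set.subset_empty_iff.mp h2
        have h3 : ∑ i ∈ Finset.range M, q i ≤ ∑ i ∈ Finset.range M, AA i :=
          Finset.sum_le_sum (fun i hi => hAq i (Finset.mem_range.mp hi))
        have hLb : L ≤ b₀ := by linarith [hpart, hii]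
        exact le_trans (le_trans hLb key2) (le_max_right _ _)
    calc varDist (pushMap P φ) Q ≤ 2 * L + 2 * ((M : ℝ) * ε) := hfinal
      _ ≤ 2 * max A' B' + 2 * Real.exp (-(c * γ)) := by linarith [hLmax, hMε]
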